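/- Let k be a field of characteristic zero. Let L ⊆ ℤ[x] be the ℤ[x]-submodule of ℤ[x] generated by the two polynomials 2 and x. Let A = AddMonoidAlgebra k ℤ[x] and B = AddMonoidAlgebra k L, each equipped with the k-algebra endomorphism σ determined on monomials by σ(T^u) = T^{x·u}. Then there is no k-algebra isomorphism θ : A ≃ B satisfying θ ∘ σ_A = σ_B ∘ θ. (Example 5.6: the difference coordinate ring k{t, t^{−1}} of 𝔸* is not isomorphic as a k-σ-algebra to k{s², s^{−2}, s^x, s^{−x}}; hence the difference torus defined by U = {2, x} is not isomorphic to 𝔸*.) -/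

import Mathlib

open Polynomial

section Aux
open AddMonoidAlgebra

/-- In a group algebra over a linearly ordered abelian group, any factor of 1 is a monomial. -/
lemma single_of_mul_eq_one_ordered {k G : Type*} [Field k] [AddCommGroup G] [LinearOrder G] [IsOrderedAddMonoid G]
    {f g : AddMonoidAlgebra k G} (h : f * g = 1) :
    ∃ (a : G) (c : k), c ≠ 0 ∧ f = AddMonoidAlgebra.single a c := by
  have hf : f ≠ 0 := by rintro rfl; simp at h
  have hg : g ≠ 0 := by rintro rfl; simp at h
  have hfs : f.coeff.support.Nonempty :=
    Finsupp.support_nonempty_iff.mpr (fun h0 => hf (AddMonoidAlgebra.coeff_eq_zero.mp h0))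
  have hgs : g.coeff.support.Nonempty :=
    Finsupp.support_nonempty_iff.mpr (fun h0 => hg (AddMonoidAlgebra.coeff_eq_zero.mp h0))
  set a := f.coeff.support.max' hfs with ha
  set b := g.coeff.support.max' hgs with hb
  set a' := f.coeff.support.min' hfs with ha'
  set b' := g.coeff.support.min' hgs with hb'
  have hua : UniqueAdd f.coeff.support g.coeff.support a b := by
    intro x y hx hy hxy
    have h1 : x ≤ a := Finset.le_max' _ _ hx
    have h2 : y ≤ b := Finset.le_max' _ _ hy
    have hxa : x = a := by
      by_contra hcon
      have hxlt : x < a := lt_of_le_of_ne h1 hcon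
      have : a + b < a + b := by
        calc a + b = x + y := hxy.symm
        _ < a + y := add_lt_add_left hxlt y
        _ ≤ a + b := add_le_add_right h2 a
      exact absurd this (lt_irrefl _)
    subst hxa
    exact ⟨rfl, add_left_cancel hxy⟩
  have hua' : UniqueAdd f.coeff.support g.coeff.support a' b' := by
    intro x y hx hy hxy
    have h1 : a' ≤ x := Finset.min'_le _ _ hx
    have h2 : b' ≤ y := Finset.min'_le _ _ hy
    have hxa : x = a' := by
      by_contra hcon
      have hxlt : a' < x := lt_of_le_of_ne h1 (Ne.symm hcon)
      have : a' + b' < a' + b' := by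
        calc a' + b' = x + y := hxy.symm
        _ > a' + y := add_lt_add_left hxlt y
        _ ≥ a' + b' := add_le_add_right h2 a'
      exact absurd this (lt_irrefl _)
    subst hxa
    exact ⟨rfl, add_left_cancel hxy⟩
  have key1 : (f * g).coeff (a + b) = f.coeff a * g.coeff b :=
    AddMonoidAlgebra.coeff_mul_add_of_uniqueAdd hua
  have key2 : (f * g).coeff (a' + b') = f.coeff a' * g.coeff b' :=
    AddMonoidAlgebra.coeff_mul_add_of_uniqueAdd hua'
  have hfa : f.coeff a ≠ 0 := Finsupp.mem_support_iff.mp (Finset.max'_mem _ hfs)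
  have hgb : g.coeff b ≠ 0 := Finsupp.mem_support_iff.mp (Finset.max'_mem _ hgs)
  have hfa' : f.coeff a' ≠ 0 := Finsupp.mem_support_iff.mp (Finset.min'_mem _ hfs)
  have hgb' : g.coeff b' ≠ 0 := Finsupp.mem_support_iff.mp (Finset.min'_mem _ hgs)
  rw [h] at key1 key2
  have h1 : (1 : AddMonoidAlgebra k G) = AddMonoidAlgebra.single 0 1 := AddMonoidAlgebra.one_def
  have hab : a + b = 0 := by
    by_contra hcon
    rw [h1, AddMonoidAlgebra.coeff_single] at key1
    rw [Finsupp.single_eq_of_ne hcon] at key1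
    exact mul_ne_zero hfa hgb key1.symm
  have hab' : a' + b' = 0 := by
    by_contra hcon
    rw [h1, AddMonoidAlgebra.coeff_single] at key2
    rw [Finsupp.single_eq_of_ne hcon] at key2
    exact mul_ne_zero hfa' hgb' key2.symm
  have haa : a = a' := by
    have hle : a' ≤ a := Finset.min'_le _ _ (Finset.max'_mem _ hfs)
    have hble : b' ≤ b := Finset.min'_le _ _ (Finset.max'_mem _ hgs)
    by_contra hcon
    have : (0 : G) < 0 := by
      calc (0 : G) = a' + b' := hab'.symm
      _ ≤ a' + b := add_le_add_right hble a'
      _ < a + b := add_lt_add_left (lt_of_le_of_ne hle (Ne.symm hcon)) b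
      _ = 0 := hab
    exact lt_irrefl _ this
  refine ⟨a, f.coeff a, hfa, ?_⟩
  rw [← AddMonoidAlgebra.coeff_inj, AddMonoidAlgebra.coeff_single,
    ← Finsupp.support_subset_singleton]
  intro u hu
  have h1u : u ≤ a := Finset.le_max' _ _ hu
  have h2u : a' ≤ u := Finset.min'_le _ _ hu
  rw [haa] at h1u
  simp [le_antisymm h1u h2u, haa]

/-- Transfer to a group embeddable into a linearly ordered abelian group. -/
lemma single_of_mul_eq_one {k G H : Type*} [Field k] [AddCommGroup G]
    [AddCommGroup H] [LinearOrder H] [IsOrderedAddMonoid H] (D : G →+ H) (hD : Function.Injective D)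
    {f g : AddMonoidAlgebra k G} (h : f * g = 1) :
    ∃ (a : G) (c : k), c ≠ 0 ∧ f = AddMonoidAlgebra.single a c := by
  classical
  set F := AddMonoidAlgebra.mapDomainRingHom k D with hF
  have hfg : F f * F g = 1 := by rw [← map_mul, h, map_one]
  obtain ⟨a, c, hc, hfc⟩ := single_of_mul_eq_one_ordered hfg
  have hsupp : (F f).coeff.support = f.coeff.support.image D :=
    Finsupp.mapDomain_support_of_injective hD f.coeff
  have hsupp2 : (F f).coeff.support = {a} := by
    rw [hfc, AddMonoidAlgebra.coeff_single]; exact Finsupp.support_single_ne_zero a hc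
  have hcard : f.coeff.support.card = 1 := by
    rw [← Finset.card_image_of_injective f.coeff.support hD, ← hsupp, hsupp2,
      Finset.card_singleton]
  obtain ⟨u, hb, hfb⟩ := Finsupp.card_support_eq_one.mp hcard
  exact ⟨u, f.coeff u, hb, AddMonoidAlgebra.coeff_injective hfb⟩

/-- Embedding of `ℤ[x]` into the lexicographic `ℕ →₀ ℤ`. -/
def polyToLex : Polynomial ℤ →+ Lex (ℕ →₀ ℤ) where
  toFun p := toLex p.toFinsupp.coeff
  map_zero' := by simp [Polynomial.toFinsupp_zero, AddMonoidAlgebra.coeff_zero]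
  map_add' p q := by simp [Polynomial.toFinsupp_add, AddMonoidAlgebra.coeff_add]

lemma polyToLex_injective : Function.Injective polyToLex := by
  intro p q h
  exact Polynomial.toFinsupp_injective (AddMonoidAlgebra.coeff_injective (toLex.injective h))

lemma single_exp_eq {k G : Type*} [Field k] [AddCommGroup G] {a b : G} {c d : k} (hc : c ≠ 0)
    (h : (AddMonoidAlgebra.single a c : AddMonoidAlgebra k G) = AddMonoidAlgebra.single b d) :
    a = b := by
  rcases AddMonoidAlgebra.single_inj.mp h with ⟨h1, _⟩ | ⟨h1, _⟩
  · exact h1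
  · exact absurd h1 hc

end Aux

/-- Example 5.6: for `L = (2, x)_{ℤ[x]} ⊆ ℤ[x]`, there is no `k`-algebra isomorphism
between `A = AddMonoidAlgebra k ℤ[x]` (the difference coordinate ring `k{t, t⁻¹}` of `𝔸*`)
and `B = AddMonoidAlgebra k L` (the ring `k{s², s⁻², s^x, s⁻ˣ}`) commuting with the
difference structures `σ_A`, `σ_B` determined by `T^u ↦ T^{x·u}`. -/
theorem torus_not_isomorphic_to_A_star
    (k : Type*) [Field k] [CharZero k]
    (L : Submodule (Polynomial ℤ) (Polynomial ℤ))
    (hL : L = Submodule.span (Polynomial ℤ) {(2 : Polynomial ℤ), Polynomial.X})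
    (σA : AddMonoidAlgebra k (Polynomial ℤ) →ₐ[k] AddMonoidAlgebra k (Polynomial ℤ))
    (hσA : ∀ (u : Polynomial ℤ) (c : k),
      σA (AddMonoidAlgebra.single u c) = AddMonoidAlgebra.single ((Polynomial.X : Polynomial ℤ) • u) c)
    (σB : AddMonoidAlgebra k L →ₐ[k] AddMonoidAlgebra k L)
    (hσB : ∀ (u : L) (c : k),
      σB (AddMonoidAlgebra.single u c) =
        AddMonoidAlgebra.single
          (⟨(Polynomial.X : Polynomial ℤ) • (u : Polynomial ℤ), L.smul_mem Polynomial.X u.2⟩ : L) c) :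
    ¬ ∃ θ : AddMonoidAlgebra k (Polynomial ℤ) ≃ₐ[k] AddMonoidAlgebra k L,
        ∀ a : AddMonoidAlgebra k (Polynomial ℤ), θ (σA a) = σB (θ a) := by
  classical
  rintro ⟨θ, hθ⟩
  set DL : ↥L →+ Lex (ℕ →₀ ℤ) := polyToLex.comp (L.subtype.toAddMonoidHom) with hDL
  have hDLinj : Function.Injective DL :=
    polyToLex_injective.comp Subtype.coe_injective
  -- every θ (single u 1) is a monomial
  have keyB : ∀ u : Polynomial ℤ, ∃ (a : L) (c : k), c ≠ 0 ∧
      θ (AddMonoidAlgebra.single u 1) = AddMonoidAlgebra.single a c := by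
    intro u
    apply single_of_mul_eq_one DL hDLinj (g := θ (AddMonoidAlgebra.single (-u) 1))
    rw [← map_mul, AddMonoidAlgebra.single_mul_single, add_neg_cancel, one_mul,
      ← AddMonoidAlgebra.one_def, map_one]
  choose Φ c hc hΦ using keyB
  have keyA : ∀ v : L, ∃ (a : Polynomial ℤ) (c : k), c ≠ 0 ∧
      θ.symm (AddMonoidAlgebra.single v 1) = AddMonoidAlgebra.single a c := by
    intro v
    apply single_of_mul_eq_one polyToLex polyToLex_injective
      (g := θ.symm (AddMonoidAlgebra.single (-v) 1))
    rw [← map_mul, AddMonoidAlgebra.single_mul_single, add_neg_cancel, one_mul,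
      ← AddMonoidAlgebra.one_def, map_one]
  choose Ψ d hd hΨ using keyA
  -- additivity
  have hadd : ∀ u v : Polynomial ℤ, Φ (u + v) = Φ u + Φ v := by
    intro u v
    have e1 : θ (AddMonoidAlgebra.single (u + v) (1 : k)) =
        AddMonoidAlgebra.single (Φ u + Φ v) (c u * c v) := by
      rw [show (AddMonoidAlgebra.single (u + v) (1 : k)) =
          AddMonoidAlgebra.single u 1 * AddMonoidAlgebra.single v 1 by
        rw [AddMonoidAlgebra.single_mul_single, one_mul]]
      rw [map_mul, hΦ u, hΦ v, AddMonoidAlgebra.single_mul_single]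
    exact single_exp_eq (hc (u + v)) ((hΦ (u + v)).symm.trans e1)
  -- X-equivariance
  have hX : ∀ u : Polynomial ℤ,
      (Φ ((X : Polynomial ℤ) • u) : Polynomial ℤ) = (X : Polynomial ℤ) • (Φ u : Polynomial ℤ) := by
    intro u
    have e1 := hθ (AddMonoidAlgebra.single u 1)
    rw [hσA, hΦ, hΦ, hσB] at e1
    have := single_exp_eq (hc ((X : Polynomial ℤ) • u)) e1
    exact congrArg Subtype.val this
  -- surjectivity
  have hsurj : ∀ v : L, Φ (Ψ v) = v := by
    intro v
    have e1 : AddMonoidAlgebra.single v (1 : k) =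
        θ (AddMonoidAlgebra.single (Ψ v) (d v)) := by
      rw [← hΨ v, AlgEquiv.apply_symm_apply]
    have e2 : θ (AddMonoidAlgebra.single (Ψ v) (d v)) =
        AddMonoidAlgebra.single (Φ (Ψ v)) (c (Ψ v) * d v) := by
      have h3 : (AddMonoidAlgebra.single (Ψ v) (d v) : AddMonoidAlgebra k (Polynomial ℤ)) =
          AddMonoidAlgebra.single (Ψ v) 1 * AddMonoidAlgebra.single 0 (d v) := by
        rw [AddMonoidAlgebra.single_mul_single, add_zero, one_mul]
      rw [h3, map_mul, hΦ, show (AddMonoidAlgebra.single (0 : Polynomial ℤ) (d v) :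
          AddMonoidAlgebra k (Polynomial ℤ)) = algebraMap k _ (d v) from rfl,
        θ.commutes, show (algebraMap k (AddMonoidAlgebra k L) (d v)) =
          AddMonoidAlgebra.single (0 : L) (d v) from rfl,
        AddMonoidAlgebra.single_mul_single, add_zero]
    exact (single_exp_eq one_ne_zero (e1.trans e2)).symm
  -- the additive map φ
  set φ : Polynomial ℤ →+ Polynomial ℤ :=
    AddMonoidHom.mk' (fun u => (Φ u : Polynomial ℤ)) (fun u v => by
      show ((Φ (u + v) : Polynomial ℤ)) = (Φ u : Polynomial ℤ) + (Φ v : Polynomial ℤ)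
      rw [hadd]; exact Submodule.coe_add _ _) with hφdef
  have hφ : ∀ u, φ u = (Φ u : Polynomial ℤ) := fun _ => rfl
  set g : Polynomial ℤ := (Φ 1 : Polynomial ℤ) with hg
  have claim : ∀ u : Polynomial ℤ, ∃ p : Polynomial ℤ, φ u = p * g := by
    intro u
    induction u using Polynomial.induction_on with
    | C a =>
      refine ⟨C a, ?_⟩
      have h1 : (C a : Polynomial ℤ) = a • (1 : Polynomial ℤ) := by simp
      have h2 : φ ((a : ℤ) • (1 : Polynomial ℤ)) = a • φ 1 := map_zsmul φ a 1
      rw [h1, h2, hφ, ← hg, zsmul_eq_mul]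
      simp
    | add p q hp hq =>
      obtain ⟨p1, e1⟩ := hp
      obtain ⟨q1, e2⟩ := hq
      exact ⟨p1 + q1, by rw [map_add, e1, e2]; ring⟩
    | monomial n a ih =>
      obtain ⟨p1, e1⟩ := ih
      refine ⟨X * p1, ?_⟩
      have h1 : (C a * X ^ (n + 1) : Polynomial ℤ) = (X : Polynomial ℤ) • (C a * X ^ n) := by
        rw [smul_eq_mul]; ring
      rw [h1, hφ, hX, ← hφ, e1, smul_eq_mul]; ring
  -- memberships
  have h2L : (2 : Polynomial ℤ) ∈ L := by
    rw [hL]; exact Submodule.subset_span (Set.mem_insert _ _)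
  have hXL : (X : Polynomial ℤ) ∈ L := by
    rw [hL]; exact Submodule.subset_span (Set.mem_insert_of_mem _ rfl)
  have h2g : ∃ p : Polynomial ℤ, (2 : Polynomial ℤ) = p * g := by
    obtain ⟨p, hp⟩ := claim (Ψ ⟨2, h2L⟩)
    refine ⟨p, ?_⟩
    rw [← hp, hφ, hsurj]
  have hXg : ∃ q : Polynomial ℤ, (X : Polynomial ℤ) = q * g := by
    obtain ⟨q, hq⟩ := claim (Ψ ⟨X, hXL⟩)
    refine ⟨q, ?_⟩
    rw [← hq, hφ, hsurj]
  have hgL : g ∈ L := (Φ 1).2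
  rw [hL] at hgL
  obtain ⟨a, b, hab⟩ := Submodule.mem_span_pair.mp hgL
  simp only [smul_eq_mul] at hab
  obtain ⟨p, hp⟩ := h2g
  obtain ⟨q, hq⟩ := hXg
  -- arithmetic contradiction
  have hg0 : g ≠ 0 := by
    rintro h0
    rw [h0, mul_zero] at hq
    exact Polynomial.X_ne_zero hq
  have hp0 : p ≠ 0 := by
    rintro rfl
    rw [zero_mul] at hp
    norm_num at hp
  have hdeg : g.natDegree = 0 := by
    have h1 : (p * g).natDegree = p.natDegree + g.natDegree := Polynomial.natDegree_mul hp0 hg0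
    rw [← hp] at h1
    have h2 : (2 : Polynomial ℤ).natDegree = 0 := by simp
    omega
  obtain ⟨m, hm⟩ := Polynomial.natDegree_eq_zero.mp hdeg
  have hm1 : q.coeff 1 * m = 1 := by
    have h1 := congrArg (fun r => Polynomial.coeff r 1) hq
    simp only [← hm, Polynomial.coeff_mul_C, Polynomial.coeff_X_one] at h1
    linarith
  have hmeven : m = a.coeff 0 * 2 := by
    have h1 := congrArg (fun r => Polynomial.coeff r 0) hab
    simp only [Polynomial.coeff_add, Polynomial.mul_coeff_zero, Polynomial.coeff_X_zero,
      mul_zero, add_zero, ← hm, Polynomial.coeff_C_zero] at h1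
    rw [← h1]
    norm_num
  have h2m : (2 : ℤ) ∣ m := ⟨a.coeff 0, by omega⟩
  have hmone : m ∣ 1 := ⟨q.coeff 1, by rw [mul_comm]; exact hm1.symm⟩
  have := h2m.trans hmone
  norm_num at this
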